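/- Let D = S + R·M_w with integers 0 ≤ S < M_w and R ≥ 0, and let x ∈ 𝔽_q^n. If S > 0 and R ≤ n − 1, then |B_w(x, D)| = q^R · (1 + |w⁻¹([S]_w)|). If S = 0 and R ≤ n, then |B_w(x, D)| = q^R. -/

import Mathlib

set_option linter.unusedSectionVars false

open scoped Classical

noncomputable section

variable {F : Type*} [Field F] [Fintype F]

def IsWeight (w : F → ℕ) : Prop :=
  (∀ a : F, w a = 0 ↔ a = 0) ∧ (∀ a : F, w (-a) = w a) ∧
    (∀ a b : F, w (a + b) ≤ w a + w b)

def Mw (w : F → ℕ) : ℕ := Finset.univ.sup w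

def mw (w : F → ℕ) : ℕ := sInf {s | ∃ a : F, a ≠ 0 ∧ w a = s}

def rho {n : ℕ} (u : Fin n → F) : ℕ :=
  (Finset.univ.filter fun j => u j ≠ 0).sup fun j => (j : ℕ) + 1

lemma rho_le {n : ℕ} (u : Fin n → F) : rho u ≤ n :=
  Finset.sup_le fun j _ => j.isLt

def chainWeight {n : ℕ} (w : F → ℕ) (u : Fin n → F) : ℕ :=
  if h : rho u = 0 then 0
  else w (u ⟨rho u - 1,
        lt_of_lt_of_le (Nat.sub_lt (Nat.pos_of_ne_zero h) Nat.one_pos) (rho_le u)⟩)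
      + (rho u - 1) * Mw w

def dChain {n : ℕ} (w : F → ℕ) (u v : Fin n → F) : ℕ := chainWeight w (u - v)

def ballW {n : ℕ} (w : F → ℕ) (x : Fin n → F) (r : ℕ) : Finset (Fin n → F) :=
  Finset.univ.filter fun v => dChain w x v ≤ r

def diamW {n : ℕ} (w : F → ℕ) (A : Finset (Fin n → F)) : ℕ :=
  (A ×ˢ A).sup fun p => dChain w p.1 p.2

def AstarW (w : F → ℕ) (n D : ℕ) : ℕ :=
  Finset.univ.sup fun A : Finset (Fin n → F) => if diamW w A ≤ D then A.card else 0

def winv (w : F → ℕ) (S : ℕ) : Finset F :=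
  Finset.univ.filter fun a => a ≠ 0 ∧ w a ≤ S

def dP {n : ℕ} (C : Finset (Fin n → F)) : ℕ :=
  sInf {s | ∃ x ∈ C, ∃ y ∈ C, x ≠ y ∧ rho (x - y) = s}

def dW {n : ℕ} (w : F → ℕ) (C : Finset (Fin n → F)) : ℕ :=
  sInf {s | ∃ x ∈ C, ∃ y ∈ C, x ≠ y ∧ dChain w x y = s}

def floorW (w : F → ℕ) (n D : ℕ) : ℕ :=
  (Finset.univ.filter fun u : Fin n → F => chainWeight w u < D).sup (chainWeight w)

def nonArch (w : F → ℕ) : Prop := ∀ a b : F, w (a + b) ≤ max (w a) (w b)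

def Sw (w : F → ℕ) : ℕ :=
  if nonArch w then Mw w
  else sInf {s | ∃ a b : F, max (w a) (w b) < w (a - b) ∧ max (w a) (w b) = s}

def WwCond (w : F → ℕ) (S : ℕ) (K : Finset F) : Prop :=
  (∀ a ∈ K, Sw w ≤ w a ∧ w a ≤ S) ∧
  (∀ a ∈ K, ∀ b : F, w b ≤ Sw w - 1 → w (a - b) ≤ S) ∧
  (∀ a ∈ K, ∀ b ∈ K, w (a - b) ≤ S)

def WwCard (w : F → ℕ) (S : ℕ) : ℕ :=
  Finset.univ.sup fun K : Finset F => if WwCond w S K then K.card else 0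

def idealOf {n : ℕ} (P : PartialOrder (Fin n)) (u : Fin n → F) : Finset (Fin n) :=
  Finset.univ.filter fun j => ∃ i : Fin n, u i ≠ 0 ∧ P.le j i

def maxOf {n : ℕ} (P : PartialOrder (Fin n)) (u : Fin n → F) : Finset (Fin n) :=
  (idealOf P u).filter fun j => ∀ k ∈ idealOf P u, P.le j k → j = k

def posetWeight {n : ℕ} (P : PartialOrder (Fin n)) (w : F → ℕ) (u : Fin n → F) : ℕ :=
  (∑ i ∈ maxOf P u, w (u i)) + Mw w * ((idealOf P u) \ (maxOf P u)).card

def dPoset {n : ℕ} (P : PartialOrder (Fin n)) (w : F → ℕ) (u v : Fin n → F) : ℕ :=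
  posetWeight P w (u - v)

def ballP {n : ℕ} (P : PartialOrder (Fin n)) (w : F → ℕ) (x : Fin n → F) (r : ℕ) :
    Finset (Fin n → F) :=
  Finset.univ.filter fun v => dPoset P w x v ≤ r

def diamP {n : ℕ} (P : PartialOrder (Fin n)) (w : F → ℕ) (A : Finset (Fin n → F)) : ℕ :=
  (A ×ˢ A).sup fun p => dPoset P w p.1 p.2

end


noncomputable section AuxProof

variable {F : Type*} [Field F] [Fintype F]

lemma lt_rho' {n : ℕ} {u : Fin n → F} {j : Fin n} (h : u j ≠ 0) : (j : ℕ) < rho u := by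
  have h1 : (j : ℕ) + 1 ≤ rho u := by
    rw [rho]
    exact Finset.le_sup (f := fun j : Fin n => (j : ℕ) + 1)
      (Finset.mem_filter.mpr ⟨Finset.mem_univ _, h⟩)
  omega

lemma eq_zero_of_rho_le' {n : ℕ} {u : Fin n → F} {j : Fin n} (h : rho u ≤ (j : ℕ)) :
    u j = 0 := by
  by_contra hc
  exact absurd (lt_rho' hc) (by omega)

lemma exists_top' {n : ℕ} {u : Fin n → F} (h : rho u ≠ 0) :
    ∃ j : Fin n, u j ≠ 0 ∧ (j : ℕ) + 1 = rho u := by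
  have hne : (Finset.univ.filter fun j : Fin n => u j ≠ 0).Nonempty := by
    by_contra hc
    rw [Finset.not_nonempty_iff_eq_empty] at hc
    exact h (by simp [rho, hc])
  obtain ⟨j, hj, hj2⟩ := Finset.exists_mem_eq_sup _ hne (fun j : Fin n => (j : ℕ) + 1)
  simp only [Finset.mem_filter] at hj
  exact ⟨j, hj.2, hj2.symm⟩

lemma wpos' {w : F → ℕ} (hw : IsWeight w) {a : F} (ha : a ≠ 0) : 1 ≤ w a := by
  rcases Nat.eq_zero_or_pos (w a) with h | h
  · exact absurd ((hw.1 a).1 h) ha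
  · exact h

lemma chainWeight_le_iff {n : ℕ} {w : F → ℕ} (hw : IsWeight w) {S R : ℕ} (hS : S < Mw w)
    (u : Fin n → F) :
    chainWeight w u ≤ S + R * Mw w ↔
      (∀ j : Fin n, R < (j : ℕ) → u j = 0) ∧ (∀ j : Fin n, (j : ℕ) = R → w (u j) ≤ S) := by
  have wzero : w (0 : F) = 0 := (hw.1 0).2 rfl
  have wle : ∀ a : F, w a ≤ Mw w := fun a => Finset.le_sup (Finset.mem_univ a)
  rw [chainWeight]
  split_ifs with h
  · have hz : ∀ j : Fin n, u j = 0 := fun j => eq_zero_of_rho_le' (by omega)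
    simp [hz, wzero]
  · obtain ⟨t, ht0, htr⟩ := exists_top' h
    have htidx : (⟨rho u - 1, lt_of_lt_of_le (Nat.sub_lt (Nat.pos_of_ne_zero h) Nat.one_pos)
        (rho_le u)⟩ : Fin n) = t := by
      ext; simp; omega
    have hro : rho u - 1 = (t : ℕ) := by omega
    rw [htidx, hro]
    constructor
    · intro hle
      have hwt : 1 ≤ w (u t) := wpos' hw ht0
      have htR : (t : ℕ) ≤ R := by
        by_contra hc
        push_neg at hc
        have hx : (R + 1) * Mw w ≤ (t : ℕ) * Mw w := Nat.mul_le_mul_right _ (by omega)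
        have hexp : (R + 1) * Mw w = R * Mw w + Mw w := by ring
        omega
      refine ⟨fun j hj => eq_zero_of_rho_le' (by omega), fun j hj => ?_⟩
      by_cases hjt : j = t
      · subst hjt
        have hmul : (j : ℕ) * Mw w = R * Mw w := by rw [hj]
        omega
      · have hne : (j : ℕ) ≠ (t : ℕ) := fun hc => hjt (Fin.ext hc)
        have : u j = 0 := eq_zero_of_rho_le' (by omega)
        simp [this, wzero]
    · rintro ⟨h1, h2⟩
      have htR : (t : ℕ) ≤ R := by
        by_contra hc
        push_neg at hc
        exact ht0 (h1 t hc)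
      by_cases hteq : (t : ℕ) = R
      · have := h2 t hteq
        have hmul : (t : ℕ) * Mw w = R * Mw w := by rw [hteq]
        omega
      · have hlt : (t : ℕ) < R := by omega
        have hwle := wle (u t)
        have hx : ((t : ℕ) + 1) * Mw w ≤ R * Mw w := Nat.mul_le_mul_right _ (by omega)
        have hexp : ((t : ℕ) + 1) * Mw w = (t : ℕ) * Mw w + Mw w := by ring
        omega

lemma ball_card_eq' {n : ℕ} (w : F → ℕ) (x : Fin n → F) (r : ℕ) :
    (ballW w x r).card =
      (Finset.univ.filter fun u : Fin n → F => chainWeight w u ≤ r).card := by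
  apply Finset.card_bij (fun v _ => x - v)
  · intro v hv
    simp only [ballW, dChain, Finset.mem_filter, Finset.mem_univ, true_and] at hv ⊢
    exact (Finset.mem_filter.mp hv).2
  · intro a ha b hb hab
    exact sub_right_injective hab
  · intro u hu
    refine ⟨x - u, ?_, by abel⟩
    simp only [ballW, dChain, Finset.mem_filter, Finset.mem_univ, true_and] at hu ⊢
    exact Finset.mem_filter.mpr ⟨Finset.mem_univ _, by simpa using hu⟩

lemma winv_card' {w : F → ℕ} (hw : IsWeight w) (S : ℕ) :
    (Finset.univ.filter fun a : F => w a ≤ S).card = 1 + (winv w S).card := by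
  have wzero : w (0 : F) = 0 := (hw.1 0).2 rfl
  have : (Finset.univ.filter fun a : F => w a ≤ S) = insert 0 (winv w S) := by
    ext a
    simp only [Finset.mem_filter, Finset.mem_univ, true_and, Finset.mem_insert, winv]
    constructor
    · intro h
      by_cases ha : a = 0
      · exact Or.inl ha
      · exact Or.inr (by simp [ha, h])
    · rintro (rfl | h)
      · simp [wzero]
      · simp at h; exact h.2
  rw [this, Finset.card_insert_of_notMem (by simp [winv])]
  omega

end AuxProof

theorem stmt2 {F : Type*} [Field F] [Fintype F] {n : ℕ} (hn : 1 ≤ n)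
    (w : F → ℕ) (hw : IsWeight w) (S R : ℕ) (hS : S < Mw w) (x : Fin n → F) :
    (0 < S → R ≤ n - 1 →
      (ballW w x (S + R * Mw w)).card = Fintype.card F ^ R * (1 + (winv w S).card)) ∧
    (S = 0 → R ≤ n →
      (ballW w x (S + R * Mw w)).card = Fintype.card F ^ R) := by
  have wzero : w (0 : F) = 0 := (hw.1 0).2 rfl
  have wle : ∀ a : F, w a ≤ Mw w := fun a => Finset.le_sup (Finset.mem_univ a)
  have main : ∀ R' : ℕ, R' < n →
      (ballW w x (S + R' * Mw w)).card = Fintype.card F ^ R' * (1 + (winv w S).card) := by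
    intro R' hR
    rw [ball_card_eq']
    set T : Fin n → Finset F := fun j =>
      if (j : ℕ) < R' then Finset.univ
      else if (j : ℕ) = R' then Finset.univ.filter fun a => w a ≤ S
      else {0} with hT
    have hset : (Finset.univ.filter fun u : Fin n → F => chainWeight w u ≤ S + R' * Mw w)
        = Fintype.piFinset T := by
      ext u
      simp only [Finset.mem_filter, Finset.mem_univ, true_and, Fintype.mem_piFinset]
      rw [chainWeight_le_iff hw hS]
      constructor
      · rintro ⟨h1, h2⟩ j
        simp only [hT]
        split_ifs with ha hb
        · exact Finset.mem_univ _
        · simp [h2 j hb]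
        · simp [h1 j (by omega)]
      · intro hj
        constructor
        · intro j hjR
          have := hj j
          simp only [hT] at this
          rw [if_neg (by omega), if_neg (by omega)] at this
          simpa using this
        · intro j hjR
          have := hj j
          simp only [hT] at this
          rw [if_neg (by omega), if_pos hjR] at this
          simp at this
          exact this
    rw [hset, Fintype.card_piFinset]
    have hcard : ∀ j : Fin n, (T j).card =
        (if (j : ℕ) < R' then Fintype.card F else 1) *
        (if (j : ℕ) = R' then 1 + (winv w S).card else 1) := by
      intro j
      simp only [hT]
      rcases lt_trichotomy ((j : ℕ)) R' with h | h | h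
      · rw [if_pos h, if_pos h, if_neg (by omega), Finset.card_univ, mul_one]
      · rw [if_neg (by omega), if_pos h, if_neg (by omega), if_pos h, winv_card' hw, one_mul]
      · rw [if_neg (by omega), if_neg (by omega), if_neg (by omega), if_neg (by omega),
          Finset.card_singleton, one_mul]
    rw [Finset.prod_congr rfl (fun j _ => hcard j), Finset.prod_mul_distrib]
    congr 1
    · rw [Fin.prod_univ_eq_prod_range (fun j => if j < R' then Fintype.card F else 1)]
      rw [Finset.prod_ite, Finset.prod_const, Finset.prod_const, one_pow, mul_one]
      congr 1
      have : (Finset.range n).filter (· < R') = Finset.range R' := by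
        ext j; simp; omega
      rw [this, Finset.card_range]
    · rw [Fin.prod_univ_eq_prod_range (fun j => if j = R' then 1 + (winv w S).card else 1)]
      rw [Finset.prod_ite_eq' (Finset.range n) R'
        (fun _ => 1 + (winv w S).card)]
      simp [Finset.mem_range.mpr hR]
  constructor
  · intro _ hR
    exact main R (by omega)
  · intro hS0 hR
    rcases Nat.lt_or_ge R n with h | h
    · have hwinv : (winv w S).card = 0 := by
        rw [Finset.card_eq_zero]
        ext a
        simp only [winv, Finset.mem_filter, Finset.mem_univ, true_and,
          Finset.notMem_empty, iff_false, not_and]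
        intro ha hle
        subst hS0
        exact ha ((hw.1 a).1 (by omega))
      rw [main R h, hwinv]
      simp
    · have hRn : R = n := le_antisymm hR h
      have hball : ballW w x (S + R * Mw w) = Finset.univ := by
        ext v
        simp only [ballW, Finset.mem_filter, Finset.mem_univ, true_and, iff_true]
        rw [dChain, chainWeight]
        split_ifs with hz
        · exact Nat.zero_le _
        · refine le_trans (Nat.add_le_add_right (wle _) _) ?_
          have hρ : 0 < rho (x - v) := Nat.pos_of_ne_zero hz
          have e : (rho (x - v) - 1) * Mw w + Mw w = rho (x - v) * Mw w := by
            have h1 : rho (x - v) - 1 + 1 = rho (x - v) := by omega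
            calc (rho (x - v) - 1) * Mw w + Mw w
                = (rho (x - v) - 1 + 1) * Mw w := by ring
              _ = rho (x - v) * Mw w := by rw [h1]
          have h5 : rho (x - v) * Mw w ≤ n * Mw w :=
            Nat.mul_le_mul_right _ (rho_le _)
          have h6 : n * Mw w ≤ S + R * Mw w := by rw [hRn]; omega
          omega
      rw [hball, Finset.card_univ, Fintype.card_fun]
      rw [Fintype.card_fin, hRn]
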